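/- arXiv:1210.3140 — 2 statements merged into one kernel-verified Lean document; each statement's English description precedes it below -/
import Mathlib

section
/- Under the kinematic equations for rolling the Lorentzian sphere, rolling realizes tangent parallel transport: if Y0 ∈ ℝ^{m+1} satisfies ⟨Y0,x0⟩_J = 0, then the vector field Y(t) := R(t) Y0 along the rolling curve x(t) := R(t) x0 satisfies ⟨Y(t), x(t)⟩_J = 0 and its tangential covariant derivative vanishes, i.e. Y′(t) − ⟨Y′(t), x(t)⟩_J · x(t) = 0 for all t. -/
open Matrix

noncomputable section

/-- `J = diag(-1, I_m)` on `ℝ^{m+1}`. -/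
def lorJ (m : ℕ) : Matrix (Fin (m+1)) (Fin (m+1)) ℝ :=
  Matrix.diagonal (fun i => if i = 0 then (-1 : ℝ) else 1)

/-- The scalar product `⟨x,y⟩_J = xᵗ J y`. -/
def lorIp {m : ℕ} (x y : Fin (m+1) → ℝ) : ℝ :=
  x ⬝ᵥ (lorJ m) *ᵥ y

lemma lorIp_comm {m : ℕ} (x y : Fin (m+1) → ℝ) : lorIp x y = lorIp y x := by
  simp only [lorIp, dotProduct, lorJ, mulVec_diagonal]
  exact Finset.sum_congr rfl fun i _ => by ring

lemma lorIp_R {m : ℕ} (R : Matrix (Fin (m+1)) (Fin (m+1)) ℝ)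
    (hRJ : Rᵀ * lorJ m * R = lorJ m) (x y : Fin (m+1) → ℝ) :
    lorIp (R *ᵥ x) (R *ᵥ y) = lorIp x y := by
  have hJt : (lorJ m)ᵀ = lorJ m := Matrix.diagonal_transpose _
  calc lorIp (R *ᵥ x) (R *ᵥ y)
      = (R *ᵥ x) ⬝ᵥ ((lorJ m * R) *ᵥ y) := by rw [lorIp, mulVec_mulVec]
    _ = ((R *ᵥ x) ᵥ* (lorJ m * R)) ⬝ᵥ y := dotProduct_mulVec _ _ _
    _ = (((lorJ m * R)ᵀ * R) *ᵥ x) ⬝ᵥ y := by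
          rw [← mulVec_transpose, mulVec_mulVec]
    _ = ((Rᵀ * lorJ m * R) *ᵥ x) ⬝ᵥ y := by
          rw [Matrix.transpose_mul, hJt, Matrix.mul_assoc]
    _ = (lorJ m *ᵥ x) ⬝ᵥ y := by rw [hRJ]
    _ = lorIp x y := by
          rw [lorIp, dotProduct_mulVec, ← mulVec_transpose, hJt]

lemma vecMulVec_mulVec' {m : ℕ} (a b w : Fin (m+1) → ℝ) :
    vecMulVec a b *ᵥ w = (b ⬝ᵥ w) • a := by
  funext i
  simp [vecMulVec, mulVec, dotProduct, Finset.mul_sum, mul_comm, mul_left_comm]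

/-- Rolling the Lorentzian sphere realizes tangent parallel transport: if
`⟨Y0,x0⟩_J = 0`, then `Y(t) := R(t) Y0` along the rolling curve `x(t) := R(t) x0`
satisfies `⟨Y(t),x(t)⟩_J = 0` and `Y′(t) − ⟨Y′(t),x(t)⟩_J • x(t) = 0`. -/
theorem rolling_realizes_tangent_parallel_transport (m : ℕ)
    (x0 : Fin (m+1) → ℝ) (hx0 : lorIp x0 x0 = 1)
    (u : ℝ → Fin (m+1) → ℝ) (hucont : Continuous u)
    (hu : ∀ t, lorIp (u t) x0 = 0)
    (R : ℝ → Matrix (Fin (m+1)) (Fin (m+1)) ℝ)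
    (hR : ∀ t i j, HasDerivAt (fun s => R s i j)
      ((R t * ((vecMulVec (u t) x0 - vecMulVec x0 (u t)) * lorJ m)) i j) t)
    (hRJ : ∀ t, (R t)ᵀ * lorJ m * R t = lorJ m)
    (Y0 : Fin (m+1) → ℝ) (hY0 : lorIp Y0 x0 = 0) :
    ∀ t,
      lorIp (R t *ᵥ Y0) (R t *ᵥ x0) = 0 ∧
      deriv (fun s => R s *ᵥ Y0) t
        - lorIp (deriv (fun s => R s *ᵥ Y0) t) (R t *ᵥ x0) • (R t *ᵥ x0) = 0 := by
  intro t
  have h1 : lorIp (R t *ᵥ Y0) (R t *ᵥ x0) = 0 := by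
    rw [lorIp_R (R t) (hRJ t), hY0]
  refine ⟨h1, ?_⟩
  set M : Matrix (Fin (m+1)) (Fin (m+1)) ℝ :=
    (vecMulVec (u t) x0 - vecMulVec x0 (u t)) * lorJ m with hM
  -- derivative of Y(s) = R s *ᵥ Y0
  have hderiv : HasDerivAt (fun s => R s *ᵥ Y0) ((R t * M) *ᵥ Y0) t := by
    rw [hasDerivAt_pi]
    intro i
    have : (fun s => (R s *ᵥ Y0) i) = fun s => ∑ j, R s i j * Y0 j := by
      funext s; simp [mulVec, dotProduct]
    rw [this]
    have : ((R t * M) *ᵥ Y0) i = ∑ j, (R t * M) i j * Y0 j := by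
      simp [mulVec, dotProduct]
    rw [this]
    exact HasDerivAt.fun_sum fun j _ => (hR t i j).mul_const (Y0 j)
  have hd : deriv (fun s => R s *ᵥ Y0) t = (R t * M) *ᵥ Y0 := hderiv.deriv
  -- compute M *ᵥ Y0
  have hMY : M *ᵥ Y0 = (-(lorIp (u t) Y0)) • x0 := by
    rw [hM, ← mulVec_mulVec, sub_mulVec, vecMulVec_mulVec', vecMulVec_mulVec']
    have hx0Y : x0 ⬝ᵥ lorJ m *ᵥ Y0 = 0 := by
      have := lorIp_comm Y0 x0
      rw [hY0] at this
      exact (this.symm : lorIp x0 Y0 = 0)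
    have huY : u t ⬝ᵥ lorJ m *ᵥ Y0 = lorIp (u t) Y0 := rfl
    rw [hx0Y, huY]
    simp [neg_smul]
  have key : (R t * M) *ᵥ Y0 = (-(lorIp (u t) Y0)) • (R t *ᵥ x0) := by
    rw [← mulVec_mulVec, hMY, mulVec_smul]
  rw [hd, key]
  have hxx : lorIp (R t *ᵥ x0) (R t *ᵥ x0) = 1 := by
    rw [lorIp_R (R t) (hRJ t), hx0]
  have hlin : lorIp ((-(lorIp (u t) Y0)) • (R t *ᵥ x0)) (R t *ᵥ x0)
      = (-(lorIp (u t) Y0)) * lorIp (R t *ᵥ x0) (R t *ᵥ x0) := by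
    simp [lorIp, smul_dotProduct]
  rw [hlin, hxx, mul_one, sub_self]
end
end

section
/- Under the kinematic equations for rolling the Lorentzian sphere, the curve R(t) in the pseudo-orthogonal group satisfies ⟨⟨R′(t), R′(t)⟩⟩_J = 2 ⟨u(t), u(t)⟩_J for all t, where ⟨⟨A,B⟩⟩_J := tr(J Aᵗ J B). Hence R(t) has the same causal character as the control u(t) (and as the rolling curve R(t)x0). -/
open Matrix

noncomputable section

private lemma lorIp_eq_sum {m : ℕ} (x y : Fin (m+1) → ℝ) :
    lorIp x y = ∑ i, (if i = 0 then (-1:ℝ) else 1) * x i * y i := by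
  unfold lorIp lorJ
  simp only [dotProduct, mulVec_diagonal]
  refine Finset.sum_congr rfl fun i _ => by split_ifs <;> ring

/-- Under the kinematic equations for rolling the Lorentzian sphere, the curve
`R(t)` in the pseudo-orthogonal group satisfies
`⟨⟨R′(t), R′(t)⟩⟩_J = 2 ⟨u(t), u(t)⟩_J`, where `⟨⟨A,B⟩⟩_J = tr(J Aᵗ J B)`. -/
theorem rolling_group_curve_causal_character (m : ℕ)
    (x0 : Fin (m+1) → ℝ) (hx0 : lorIp x0 x0 = 1)
    (u : ℝ → Fin (m+1) → ℝ) (hucont : Continuous u)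
    (hu : ∀ t, lorIp (u t) x0 = 0)
    (R R' : ℝ → Matrix (Fin (m+1)) (Fin (m+1)) ℝ)
    (hR : ∀ t i j, HasDerivAt (fun s => R s i j) (R' t i j) t)
    (hkin : ∀ t, R' t = R t * ((vecMulVec (u t) x0 - vecMulVec x0 (u t)) * lorJ m))
    (hRJ : ∀ t, (R t)ᵀ * lorJ m * R t = lorJ m) :
    ∀ t,
      Matrix.trace (lorJ m * (R' t)ᵀ * lorJ m * R' t) = 2 * lorIp (u t) (u t) := by
  intro t
  set d : Fin (m+1) → ℝ := fun i => if i = 0 then (-1:ℝ) else 1 with hd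
  have hdd : ∀ i, d i * d i = 1 := by
    intro i; by_cases h : i = 0 <;> simp [hd, h]
  set A : Matrix (Fin (m+1)) (Fin (m+1)) ℝ :=
    (vecMulVec (u t) x0 - vecMulVec x0 (u t)) * lorJ m with hA
  -- reduce to tr(J Aᵀ J A)
  have hred : lorJ m * (R' t)ᵀ * lorJ m * R' t = lorJ m * Aᵀ * lorJ m * A := by
    rw [hkin t, transpose_mul]
    calc lorJ m * (Aᵀ * (R t)ᵀ) * lorJ m * (R t * A)
        = lorJ m * Aᵀ * ((R t)ᵀ * lorJ m * R t) * A := by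
          noncomm_ring
      _ = lorJ m * Aᵀ * lorJ m * A := by rw [hRJ t]
  rw [hred]
  -- entries of A
  have hAe : ∀ k i, A k i = (u t k * x0 i - x0 k * u t i) * d i := by
    intro k i
    simp [hA, lorJ, mul_diagonal, Matrix.sub_apply, vecMulVec_apply, hd]
  -- trace as a double sum
  have htr : Matrix.trace (lorJ m * Aᵀ * lorJ m * A)
      = ∑ i, ∑ k, d i * (A k i * d k * A k i) := by
    have h1 : ∀ i k, (lorJ m * Aᵀ * lorJ m) i k = d i * A k i * d k := by
      intro i k
      rw [show lorJ m * Aᵀ * lorJ m = lorJ m * Aᵀ * lorJ m from rfl]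
      unfold lorJ
      rw [mul_diagonal, diagonal_mul, transpose_apply]
    rw [Matrix.trace]
    refine Finset.sum_congr rfl fun i _ => ?_
    rw [Matrix.diag, mul_apply]
    refine Finset.sum_congr rfl fun k _ => ?_
    rw [h1]; ring
  rw [htr]
  have hsum : ∀ i k, d i * (A k i * d k * A k i)
      = (d k * u t k * u t k) * (d i * x0 i * x0 i)
        - 2 * ((d k * u t k * x0 k) * (d i * u t i * x0 i))
        + (d k * x0 k * x0 k) * (d i * u t i * u t i) := by
    intro i k
    have h1 := hdd i
    have h2 := hdd k
    rw [hAe k i]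
    linear_combination d i * d k * (u t k * x0 i - x0 k * u t i)^2 * h1
  simp only [hsum]
  have hP : (∑ i, d i * u t i * x0 i) = 0 := by
    rw [← lorIp_eq_sum]; exact hu t
  have hSx : (∑ i, d i * x0 i * x0 i) = 1 := by
    rw [← lorIp_eq_sum]; exact hx0
  have hSu : (∑ i, d i * u t i * u t i) = lorIp (u t) (u t) := (lorIp_eq_sum _ _).symm
  simp only [Finset.sum_add_distrib, Finset.sum_sub_distrib, ← Finset.sum_mul,
    ← Finset.mul_sum]
  rw [hP, hSx, hSu]
  ring
end
end
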